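/- Let H be a complex Hilbert space and let T, A, S be bounded operators on H with polar decompositions T = U_T|T|, A = U_A|A|, S = U_S|S|. Set Y = |T|·A·|S*| and W = U_T*U_T U_A U_S U_S*. Then Y = W|Y| holds if and only if U_A*Y is positive and U_A U_A* Y = Y. -/

import Mathlib

open ContinuousLinearMap

noncomputable def absOp {H K : Type*} [NormedAddCommGroup H] [InnerProductSpace ℂ H]
    [CompleteSpace H] [NormedAddCommGroup K] [InnerProductSpace ℂ K] [CompleteSpace K]
    (T : H →L[ℂ] K) : H →L[ℂ] H :=
  CFC.sqrt (ContinuousLinearMap.adjoint T ∘L T)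

noncomputable def projCR {H K : Type*} [NormedAddCommGroup H] [InnerProductSpace ℂ H]
    [CompleteSpace H] [NormedAddCommGroup K] [InnerProductSpace ℂ K] [CompleteSpace K]
    (C : K →L[ℂ] H) : H →L[ℂ] H :=
  letI := (LinearMap.range (C : K →ₗ[ℂ] H)).topologicalClosure.isClosed_topologicalClosure.completeSpace_coe
  (LinearMap.range (C : K →ₗ[ℂ] H)).topologicalClosure.subtypeL ∘L
    Submodule.orthogonalProjectionOnto (LinearMap.range (C : K →ₗ[ℂ] H)).topologicalClosure

/-- `B = U|B|` is the polar decomposition: `U` is a partial isometry (automatic) whose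
initial projection `U*U` is the orthogonal projection onto the closure of `range B*`. -/
noncomputable def IsPolarDecomp {H K : Type*} [NormedAddCommGroup H] [InnerProductSpace ℂ H]
    [CompleteSpace H] [NormedAddCommGroup K] [InnerProductSpace ℂ K] [CompleteSpace K]
    (B U : H →L[ℂ] K) : Prop :=
  B = U ∘L absOp B ∧
    ContinuousLinearMap.adjoint U ∘L U = projCR (ContinuousLinearMap.adjoint B)

set_option maxHeartbeats 2000000
set_option synthInstance.maxHeartbeats 2000000

variable {H : Type*} [NormedAddCommGroup H] [InnerProductSpace ℂ H] [CompleteSpace H]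

section Aux

local notation "⟪" x ", " y "⟫" => @inner ℂ _ _ x y

lemma absOp_nonneg (B : H →L[ℂ] H) : 0 ≤ absOp B := CFC.sqrt_nonneg (a := ContinuousLinearMap.adjoint B ∘L B)

lemma absOp_isSelfAdjoint (B : H →L[ℂ] H) : IsSelfAdjoint (absOp B) :=
  ((nonneg_iff_isPositive _).mp (absOp_nonneg B)).isSelfAdjoint

lemma adjoint_comp_self_nonneg (B : H →L[ℂ] H) : 0 ≤ adjoint B ∘L B := by
  rw [nonneg_iff_isPositive]
  exact isPositive_adjoint_comp_self B

lemma absOp_mul_self (B : H →L[ℂ] H) : absOp B ∘L absOp B = adjoint B ∘L B := by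
  have h := CFC.sq_sqrt (adjoint B ∘L B) (adjoint_comp_self_nonneg B)
  rw [sq, mul_def] at h
  exact h

lemma projCR_isSelfAdjoint (C : H →L[ℂ] H) : IsSelfAdjoint (projCR C) := by
  unfold projCR
  letI := (LinearMap.range (C : H →ₗ[ℂ] H)).topologicalClosure.isClosed_topologicalClosure.completeSpace_coe
  exact isSelfAdjoint_starProjection _

lemma projCR_idem (C : H →L[ℂ] H) : projCR C ∘L projCR C = projCR C := by
  unfold projCR
  letI := (LinearMap.range (C : H →ₗ[ℂ] H)).topologicalClosure.isClosed_topologicalClosure.completeSpace_coe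
  ext x
  simp only [comp_apply, Submodule.subtypeL_apply]
  congr 1
  exact Submodule.orthogonalProjectionOnto_mem_subspace_eq_self _

lemma projCR_comp (C : H →L[ℂ] H) : projCR C ∘L C = C := by
  unfold projCR
  letI := (LinearMap.range (C : H →ₗ[ℂ] H)).topologicalClosure.isClosed_topologicalClosure.completeSpace_coe
  ext x
  simp only [comp_apply, Submodule.subtypeL_apply]
  exact Submodule.starProjection_eq_self_iff.mpr
    (Submodule.le_topologicalClosure _ (LinearMap.mem_range_self _ x))

/-- For a self-adjoint idempotent `p`, `re ⟪p u, u⟫ = ‖p u‖ ^ 2`. -/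
lemma proj_re_inner {p : H →L[ℂ] H} (hsa : IsSelfAdjoint p) (hidem : p ∘L p = p) (u : H) :
    ⟪p u, u⟫ = (‖p u‖ : ℂ) ^ 2 := by
  have h1 : ⟪p u, u⟫ = ⟪p u, p u⟫ := by
    calc ⟪p u, u⟫ = ⟪p (p u), u⟫ := by rw [← comp_apply, hidem]
    _ = ⟪p u, p u⟫ := by
        rw [← ContinuousLinearMap.adjoint_inner_left, hsa.adjoint_eq]
  rw [h1, inner_self_eq_norm_sq_to_K]
  norm_cast

lemma proj_inner_self {p : H →L[ℂ] H} (hsa : IsSelfAdjoint p) (hidem : p ∘L p = p) (u : H) :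
    ⟪p u, u⟫ = ⟪p u, p u⟫ := by
  calc ⟪p u, u⟫ = ⟪p (p u), u⟫ := by rw [← comp_apply, hidem]
  _ = ⟪p u, p u⟫ := by
      rw [← ContinuousLinearMap.adjoint_inner_left, hsa.adjoint_eq]

lemma proj_re_inner' {p : H →L[ℂ] H} (hsa : IsSelfAdjoint p) (hidem : p ∘L p = p) (u : H) :
    RCLike.re ⟪p u, u⟫ = ‖p u‖ ^ 2 := by
  have h1 : ⟪p u, u⟫ = ⟪p u, p u⟫ := by
    calc ⟪p u, u⟫ = ⟪p (p u), u⟫ := by rw [← comp_apply, hidem]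
    _ = ⟪p u, p u⟫ := by
        rw [← ContinuousLinearMap.adjoint_inner_left, hsa.adjoint_eq]
  rw [h1, inner_self_eq_norm_sq]

lemma proj_norm_le {p : H →L[ℂ] H} (hsa : IsSelfAdjoint p) (hidem : p ∘L p = p) (u : H) :
    ‖p u‖ ≤ ‖u‖ := by
  by_cases h0 : p u = 0
  · simp [h0]
  have h := proj_re_inner hsa hidem u
  have hcs : ‖⟪p u, u⟫‖ ≤ ‖p u‖ * ‖u‖ := norm_inner_le_norm _ _
  rw [h] at hcs
  have : ‖p u‖ ^ 2 ≤ ‖p u‖ * ‖u‖ := by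
    calc ‖p u‖ ^ 2 = ‖(‖p u‖ : ℂ) ^ 2‖ := by
          rw [norm_pow]; simp [abs_of_nonneg (norm_nonneg _)]
    _ ≤ ‖p u‖ * ‖u‖ := hcs
  have hpos : 0 < ‖p u‖ := norm_pos_iff.mpr h0
  nlinarith
  
/-- If `p` is a self-adjoint idempotent and `‖p u‖ = ‖u‖`, then `p u = u`. -/
lemma proj_norm_eq {p : H →L[ℂ] H} (hsa : IsSelfAdjoint p) (hidem : p ∘L p = p) {u : H}
    (h : ‖p u‖ = ‖u‖) : p u = u := by
  have key : ⟪u - p u, u - p u⟫ = 0 := by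
    have h1 : ⟪p u, u⟫ = (‖p u‖ : ℂ) ^ 2 := proj_re_inner hsa hidem u
    have h2 : ⟪u, p u⟫ = (‖p u‖ : ℂ) ^ 2 := by
      rw [← inner_conj_symm, h1]
      rw [map_pow, Complex.conj_ofReal]
    have h3 : ⟪p u, p u⟫ = (‖p u‖ : ℂ) ^ 2 := by
      rw [inner_self_eq_norm_sq_to_K]; norm_cast
    rw [inner_sub_sub_self, h1, h2, h3, inner_self_eq_norm_sq_to_K, h]
    norm_num
  have h0 := inner_self_eq_zero.mp key
  exact (eq_of_sub_eq_zero h0).symm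
  

lemma pos_inner_zero {R : H →L[ℂ] H} (hR : R.IsPositive) {v : H} (hv : ⟪R v, v⟫ = 0) :
    R v = 0 := by
  have h0 : 0 ≤ R := (nonneg_iff_isPositive R).mpr hR
  have hs := CFC.sq_sqrt R h0
  rw [sq, mul_def] at hs
  have hsa : IsSelfAdjoint (CFC.sqrt R) :=
    ((nonneg_iff_isPositive _).mp (CFC.sqrt_nonneg (a := R))).isSelfAdjoint
  have key : ⟪CFC.sqrt R v, CFC.sqrt R v⟫ = 0 := by
    rw [← ContinuousLinearMap.adjoint_inner_left, hsa.adjoint_eq, ← comp_apply, hs]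
    exact hv
  have hz : CFC.sqrt R v = 0 := inner_self_eq_zero.mp key
  calc R v = (CFC.sqrt R ∘L CFC.sqrt R) v := by rw [hs]
  _ = 0 := by simp [comp_apply, hz]

lemma proj_absorb {p P : H →L[ℂ] H} (hsa : IsSelfAdjoint p) (hPsa : IsSelfAdjoint P)
    (h : p ∘L (P ∘L P) = P ∘L P) : p ∘L P = P := by
  have h1 : (P ∘L P) ∘L p = P ∘L P := by
    have h' := congrArg ContinuousLinearMap.adjoint h
    rwa [adjoint_comp, adjoint_comp, hPsa.adjoint_eq, hsa.adjoint_eq] at h'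
  have h2 : ∀ x, P (p x) = P x := by
    intro x
    have hz : P (P (p x)) = P (P x) := by
      have := congrArg (fun (f : H →L[ℂ] H) => f x) h1
      simpa [comp_apply] using this
    have key : ⟪P (p x) - P x, P (p x) - P x⟫ = 0 := by
      have expand : ∀ a b : H, ⟪P a, P b⟫ = ⟪P (P a), b⟫ := by
        intro a b
        rw [← ContinuousLinearMap.adjoint_inner_left, hPsa.adjoint_eq]
      rw [inner_sub_sub_self]
      rw [expand, expand, expand, expand, hz]
      ring
    exact sub_eq_zero.mp (inner_self_eq_zero.mp key)
  have h3 : P ∘L p = P := by ext x; exact h2 x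
  have h4 := congrArg ContinuousLinearMap.adjoint h3
  rwa [adjoint_comp, hPsa.adjoint_eq, hsa.adjoint_eq] at h4

section Polar

variable {B U : H →L[ℂ] H}

lemma polar_E_sa (hB : IsPolarDecomp B U) : IsSelfAdjoint (adjoint U ∘L U) := by
  rw [hB.2]; exact projCR_isSelfAdjoint _

lemma polar_E_idem (hB : IsPolarDecomp B U) :
    (adjoint U ∘L U) ∘L (adjoint U ∘L U) = adjoint U ∘L U := by
  rw [hB.2]; exact projCR_idem _

lemma polar_E_absOp (hB : IsPolarDecomp B U) :
    (adjoint U ∘L U) ∘L absOp B = absOp B := by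
  apply proj_absorb (polar_E_sa hB) (absOp_isSelfAdjoint B)
  rw [absOp_mul_self, ← comp_assoc, hB.2, projCR_comp]

lemma polar_UEU (hB : IsPolarDecomp B U) : ∀ x, U (adjoint U (U x)) = U x := by
  intro x
  set E := adjoint U ∘L U with hE
  have hEidem : E (E x) = E x := by
    have := congrArg (fun (f : H →L[ℂ] H) => f x) (polar_E_idem hB)
    simpa [hE, comp_apply] using this
  have hEx : E (x - E x) = 0 := by
    rw [map_sub, hEidem, sub_self]
  have key : ⟪U (x - E x), U (x - E x)⟫ = 0 := by
    rw [← ContinuousLinearMap.adjoint_inner_left]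
    have : adjoint U (U (x - E x)) = E (x - E x) := by simp [hE, comp_apply]
    rw [this, hEx, inner_zero_left]
  have hz : U (x - E x) = 0 := inner_self_eq_zero.mp key
  have : U x - U (E x) = 0 := by rw [← map_sub]; exact hz
  have h4 : U (E x) = U x := (sub_eq_zero.mp this).symm
  simpa [hE, comp_apply] using h4

lemma polar_F_sa (hB : IsPolarDecomp B U) : IsSelfAdjoint (U ∘L adjoint U) := by
  rw [IsSelfAdjoint, star_eq_adjoint, adjoint_comp, adjoint_adjoint]

lemma polar_F_idem (hB : IsPolarDecomp B U) :
    (U ∘L adjoint U) ∘L (U ∘L adjoint U) = U ∘L adjoint U := by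
  ext x
  simp only [comp_apply]
  rw [polar_UEU hB]

lemma polar_F_absOp_star (hB : IsPolarDecomp B U) :
    (U ∘L adjoint U) ∘L absOp (adjoint B) = absOp (adjoint B) := by
  apply proj_absorb (polar_F_sa hB) (absOp_isSelfAdjoint _)
  rw [absOp_mul_self, adjoint_adjoint]
  have hFB : (U ∘L adjoint U) ∘L B = B := by
    nth_rewrite 1 [hB.1]
    nth_rewrite 2 [hB.1]
    ext x
    simp only [comp_apply]
    rw [polar_UEU hB]
  rw [← comp_assoc, hFB]

lemma polar_norm_le (hB : IsPolarDecomp B U) (x : H) : ‖U x‖ = ‖(adjoint U ∘L U) x‖ := by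
  have key : RCLike.re ⟪U x, U x⟫ = ‖(adjoint U ∘L U) x‖ ^ 2 := by
    rw [← ContinuousLinearMap.adjoint_inner_left, ← comp_apply]
    exact proj_re_inner' (polar_E_sa hB) (polar_E_idem hB) x
  rw [inner_self_eq_norm_sq] at key
  have : (‖U x‖ : ℝ) ^ 2 = ‖(adjoint U ∘L U) x‖ ^ 2 := key
  calc ‖U x‖ = Real.sqrt (‖U x‖ ^ 2) := (Real.sqrt_sq (norm_nonneg _)).symm
  _ = Real.sqrt (‖(adjoint U ∘L U) x‖ ^ 2) := by rw [this]
  _ = _ := Real.sqrt_sq (norm_nonneg _)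

end Polar

end Aux


local notation "⟪" x ", " y "⟫" => @inner ℂ _ _ x y

theorem stmt11 (T A S U_T U_A U_S : H →L[ℂ] H)
    (hT : IsPolarDecomp T U_T) (hA : IsPolarDecomp A U_A) (hS : IsPolarDecomp S U_S) :
    absOp T ∘L A ∘L absOp (ContinuousLinearMap.adjoint S) =
        (ContinuousLinearMap.adjoint U_T ∘L U_T ∘L U_A ∘L U_S ∘L
            ContinuousLinearMap.adjoint U_S) ∘L
          absOp (absOp T ∘L A ∘L absOp (ContinuousLinearMap.adjoint S)) ↔
      (ContinuousLinearMap.adjoint U_A ∘L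
          (absOp T ∘L A ∘L absOp (ContinuousLinearMap.adjoint S))).IsPositive ∧
        U_A ∘L ContinuousLinearMap.adjoint U_A ∘L
            (absOp T ∘L A ∘L absOp (ContinuousLinearMap.adjoint S)) =
          absOp T ∘L A ∘L absOp (ContinuousLinearMap.adjoint S) := by
  have haTsa := absOp_isSelfAdjoint T
  have haSsa := absOp_isSelfAdjoint (ContinuousLinearMap.adjoint S)
  set aT := absOp T with haT
  set aS := absOp (ContinuousLinearMap.adjoint S) with haS
  set Y := aT ∘L A ∘L aS with hYdef
  set aY := absOp Y with haY
  have haYsa : IsSelfAdjoint aY := absOp_isSelfAdjoint Y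
  have hEsa := polar_E_sa hT
  have hEidem := polar_E_idem hT
  have hEaT' : ∀ x, ContinuousLinearMap.adjoint U_T (U_T (aT x)) = aT x := by
    intro x
    have := congrArg (fun f : H →L[ℂ] H => f x) (polar_E_absOp hT)
    simpa [comp_apply] using this
  have hFaS' : ∀ x, U_S (ContinuousLinearMap.adjoint U_S (aS x)) = aS x := by
    intro x
    have := congrArg (fun f : H →L[ℂ] H => f x) (polar_F_absOp_star hS)
    simpa [comp_apply] using this
  have hYadj' : ∀ x, ContinuousLinearMap.adjoint Y x
      = aS (ContinuousLinearMap.adjoint A (aT x)) := by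
    intro x
    rw [hYdef]
    simp [adjoint_comp, comp_apply, haTsa.adjoint_eq, haSsa.adjoint_eq]
  have hsq' : ∀ x, aY (aY x) = ContinuousLinearMap.adjoint Y (Y x) := by
    intro x
    have := congrArg (fun f : H →L[ℂ] H => f x) (absOp_mul_self Y)
    simpa [comp_apply, ← haY] using this
  have hFaY' : ∀ x, U_S (ContinuousLinearMap.adjoint U_S (aY x)) = aY x := by
    have hFaY : (U_S ∘L ContinuousLinearMap.adjoint U_S) ∘L aY = aY := by
      apply proj_absorb (polar_F_sa hS) haYsa
      ext x
      simp only [comp_apply]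
      rw [hsq' x, hYadj' (Y x), hFaS']
    intro x
    have := congrArg (fun f : H →L[ℂ] H => f x) hFaY
    simpa [comp_apply] using this
  have hUAnorm : ∀ x, ‖U_A x‖ ≤ ‖x‖ := fun x => by
    rw [polar_norm_le hA x]
    exact proj_norm_le (polar_E_sa hA) (polar_E_idem hA) x
  constructor
  · intro h
    have h' : ∀ x, Y x = ContinuousLinearMap.adjoint U_T (U_T (U_A (aY x))) := by
      intro x
      have := congrArg (fun f : H →L[ℂ] H => f x) h
      simp only [comp_apply] at this
      rw [hFaY' x] at this
      exact this
    have hQsa : IsSelfAdjoint (ContinuousLinearMap.adjoint U_A ∘L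
        ((ContinuousLinearMap.adjoint U_T ∘L U_T) ∘L U_A)) := by
      rw [IsSelfAdjoint, star_eq_adjoint, adjoint_comp, adjoint_comp, adjoint_adjoint,
        hEsa.adjoint_eq]
      ext x
      simp [comp_apply]
    have honepos : (1 - ContinuousLinearMap.adjoint U_A ∘L
        ((ContinuousLinearMap.adjoint U_T ∘L U_T) ∘L U_A)).IsPositive := by
      constructor
      · exact ((IsSelfAdjoint.one (R := H →L[ℂ] H)).sub hQsa).isSymmetric
      · intro x
        rw [reApplyInnerSelf_apply]
        have hre : RCLike.re ⟪(ContinuousLinearMap.adjoint U_A ∘L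
            ((ContinuousLinearMap.adjoint U_T ∘L U_T) ∘L U_A)) x, x⟫
            = ‖(ContinuousLinearMap.adjoint U_T ∘L U_T) (U_A x)‖ ^ 2 := by
          simp only [comp_apply]
          rw [ContinuousLinearMap.adjoint_inner_left]
          exact proj_re_inner' hEsa hEidem (U_A x)
        rw [sub_apply, ContinuousLinearMap.one_apply, inner_sub_left, map_sub, hre, inner_self_eq_norm_sq]
        have h1 : ‖(ContinuousLinearMap.adjoint U_T ∘L U_T) (U_A x)‖ ≤ ‖U_A x‖ :=
          proj_norm_le hEsa hEidem (U_A x)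
        have h2 : ‖U_A x‖ ≤ ‖x‖ := hUAnorm x
        have h3 : (0:ℝ) ≤ ‖(ContinuousLinearMap.adjoint U_T ∘L U_T) (U_A x)‖ := norm_nonneg _
        nlinarith
    have hQY : ∀ x, ContinuousLinearMap.adjoint U_A
        ((ContinuousLinearMap.adjoint U_T ∘L U_T) (U_A (aY x))) = aY x := by
      intro x
      have hinner : ⟪(1 - ContinuousLinearMap.adjoint U_A ∘L
          ((ContinuousLinearMap.adjoint U_T ∘L U_T) ∘L U_A)) (aY x), aY x⟫ = 0 := by
        rw [sub_apply, ContinuousLinearMap.one_apply, inner_sub_left]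
        have e1 : ⟪(ContinuousLinearMap.adjoint U_A ∘L
            ((ContinuousLinearMap.adjoint U_T ∘L U_T) ∘L U_A)) (aY x), aY x⟫
            = ⟪Y x, Y x⟫ := by
          rw [comp_apply, ContinuousLinearMap.adjoint_inner_left, comp_apply,
            proj_inner_self hEsa hEidem (U_A (aY x))]
          rw [show (ContinuousLinearMap.adjoint U_T ∘L U_T) (U_A (aY x)) = Y x from by
            rw [comp_apply]; exact (h' x).symm]
        have e2a : ⟪aY (aY x), x⟫ = ⟪aY x, aY x⟫ := by
          nth_rewrite 1 [← haYsa.adjoint_eq]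
          exact ContinuousLinearMap.adjoint_inner_left _ _ _
        have e2 : ⟪aY x, aY x⟫ = ⟪Y x, Y x⟫ := by
          rw [← e2a, hsq' x, ContinuousLinearMap.adjoint_inner_left]
        rw [e1, e2, sub_self]
      have hz := pos_inner_zero honepos hinner
      rw [sub_apply, ContinuousLinearMap.one_apply] at hz
      have := sub_eq_zero.mp hz
      simpa [comp_apply] using this.symm
    have hUAY : ∀ x, ContinuousLinearMap.adjoint U_A (Y x) = aY x := by
      intro x
      rw [h' x]
      have := hQY x
      simpa [comp_apply] using this
    have hEU : ∀ x, ContinuousLinearMap.adjoint U_T (U_T (U_A (aY x))) = U_A (aY x) := by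
      intro x
      have heq2 : ‖(ContinuousLinearMap.adjoint U_T ∘L U_T) (U_A (aY x))‖ ^ 2
          = ‖aY x‖ ^ 2 := by
        have hre := proj_re_inner' hEsa hEidem (U_A (aY x))
        rw [← hre]
        have : ⟪(ContinuousLinearMap.adjoint U_T ∘L U_T) (U_A (aY x)), U_A (aY x)⟫
            = ⟪aY x, aY x⟫ := by
          rw [← ContinuousLinearMap.adjoint_inner_left]
          rw [show ContinuousLinearMap.adjoint U_A
            ((ContinuousLinearMap.adjoint U_T ∘L U_T) (U_A (aY x))) = aY x from hQY x]
        rw [this, inner_self_eq_norm_sq]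
      have heq : ‖(ContinuousLinearMap.adjoint U_T ∘L U_T) (U_A (aY x))‖ = ‖aY x‖ := by
        calc ‖(ContinuousLinearMap.adjoint U_T ∘L U_T) (U_A (aY x))‖
            = Real.sqrt (‖(ContinuousLinearMap.adjoint U_T ∘L U_T) (U_A (aY x))‖ ^ 2) :=
              (Real.sqrt_sq (norm_nonneg _)).symm
        _ = Real.sqrt (‖aY x‖ ^ 2) := by rw [heq2]
        _ = ‖aY x‖ := Real.sqrt_sq (norm_nonneg _)
      have hle : ‖(ContinuousLinearMap.adjoint U_T ∘L U_T) (U_A (aY x))‖ = ‖U_A (aY x)‖ := by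
        have a1 : ‖(ContinuousLinearMap.adjoint U_T ∘L U_T) (U_A (aY x))‖ ≤ ‖U_A (aY x)‖ :=
          proj_norm_le hEsa hEidem _
        have a2 : ‖U_A (aY x)‖ ≤ ‖aY x‖ := hUAnorm _
        rw [heq]
        linarith [heq ▸ a1]
      have := proj_norm_eq hEsa hEidem hle
      simpa [comp_apply] using this
    refine ⟨?_, ?_⟩
    · have hop : ContinuousLinearMap.adjoint U_A ∘L Y = aY := by
        ext x
        simp only [comp_apply]
        exact hUAY x
      rw [hop, haY]
      exact (nonneg_iff_isPositive _).mp (absOp_nonneg Y)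
    · ext x
      simp only [comp_apply]
      rw [hUAY x, h' x, hEU x]
  · rintro ⟨hpos, hG⟩
    have hGx : ∀ x, U_A (ContinuousLinearMap.adjoint U_A (Y x)) = Y x := fun x => by
      have := congrArg (fun f : H →L[ℂ] H => f x) hG
      simpa [comp_apply] using this
    have hPsa : IsSelfAdjoint (ContinuousLinearMap.adjoint U_A ∘L Y) := hpos.isSelfAdjoint
    have hop : ContinuousLinearMap.adjoint Y ∘L U_A = ContinuousLinearMap.adjoint U_A ∘L Y := by
      conv_rhs => rw [← hPsa.adjoint_eq, adjoint_comp, adjoint_adjoint]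
    have hop' : ∀ z, ContinuousLinearMap.adjoint Y (U_A z)
        = ContinuousLinearMap.adjoint U_A (Y z) := fun z => by
      have := congrArg (fun f : H →L[ℂ] H => f z) hop
      simpa [comp_apply] using this
    have hsqP : ∀ x, ContinuousLinearMap.adjoint Y (Y x)
        = ContinuousLinearMap.adjoint U_A (Y (ContinuousLinearMap.adjoint U_A (Y x))) := by
      intro x
      calc ContinuousLinearMap.adjoint Y (Y x)
          = ContinuousLinearMap.adjoint Y (U_A (ContinuousLinearMap.adjoint U_A (Y x))) := by
            rw [hGx x]
      _ = ContinuousLinearMap.adjoint U_A (Y (ContinuousLinearMap.adjoint U_A (Y x))) :=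
            hop' _
    have habsY : aY = ContinuousLinearMap.adjoint U_A ∘L Y := by
      have h2 : ContinuousLinearMap.adjoint Y ∘L Y
          = (ContinuousLinearMap.adjoint U_A ∘L Y) ^ 2 := by
        rw [sq, mul_def]
        ext x
        simp only [comp_apply]
        exact hsqP x
      rw [haY]
      show CFC.sqrt (ContinuousLinearMap.adjoint Y ∘L Y) = ContinuousLinearMap.adjoint U_A ∘L Y
      rw [h2, CFC.sqrt_sq _ ((nonneg_iff_isPositive _).mpr hpos)]
    have haY' : ∀ x, aY x = ContinuousLinearMap.adjoint U_A (Y x) := fun x => by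
      have := congrArg (fun f : H →L[ℂ] H => f x) habsY
      simpa [comp_apply] using this
    have hPx : ∀ x, ContinuousLinearMap.adjoint U_A (Y x)
        = aS (ContinuousLinearMap.adjoint A (aT (U_A x))) := fun x => by
      rw [← hop' x, hYadj' (U_A x)]
    ext x
    simp only [comp_apply]
    rw [haY' x, hPx x, hFaS', ← hPx x, hGx x]
    rw [show Y x = aT (A (aS x)) from by rw [hYdef]; simp [comp_apply]]
    exact (hEaT' _).symm
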